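/- Let n ≥ 1, N = 2n+1, and let A_{−n} ⊆ A_{−n+1} ⊆ … ⊆ A_{−1} be complex subspaces of ℂ^N, each isotropic for the symmetric bilinear form b(x,y) = Σ_j x_j y_j (equivalently A_{−1} ⊆ (conj A_{−1})^⊥). In the Laurent polynomial module H = ℂ[λ,λ^{−1}]^N with H_+ = ℂ[λ]^N, define the ℂ-subspaces W_ξ = Σ_{i=1}^{n} λ^{−i}A_{−i} + Σ_{i=0}^{n−1} λ^{i}(conj A_{−i−1})^⊥ + λ^n H_+ and W_{ξ_1} = Σ_{i=1}^{n−1} λ^{−i}A_{−i} + Σ_{i=0}^{n−2} λ^{i}(conj A_{−i−1})^⊥ + λ^{n−1}H_+ (all sums are sums of ℂ-subspaces of H). Then W_{ξ_1} = (W_ξ ∩ λ^{−n+1}H_+) + λ^{n−1}H_+. -/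

import Mathlib

/-!
The Grassmannian model: `H = ℂ[λ,λ⁻¹]^N` is modelled as finitely supported
families `ℤ →₀ ℂ^N` (the coefficient of `λ^m` being the value at `m`), with
`ℂ^N = EuclideanSpace ℂ (Fin N)`.
-/

/-- The subspace `λ^k V ⊆ H` for a subspace `V ⊆ ℂ^N`. -/
noncomputable def atDeg (N : ℕ) (k : ℤ) (V : Submodule ℂ (EuclideanSpace ℂ (Fin N))) :
    Submodule ℂ (ℤ →₀ EuclideanSpace ℂ (Fin N)) :=
  V.map (Finsupp.lsingle k)

/-- The subspace `λ^d H_+ ⊆ H`: elements with no coefficients below degree `d`. -/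
noncomputable def shiftedHplus (N : ℕ) (d : ℤ) :
    Submodule ℂ (ℤ →₀ EuclideanSpace ℂ (Fin N)) where
  carrier := {f | ∀ m : ℤ, m < d → f m = 0}
  zero_mem' := by intro m _; simp
  add_mem' := by
    intro f g hf hg m hm
    simp [Finsupp.add_apply, hf m hm, hg m hm]
  smul_mem' := by
    intro c f hf m hm
    simp [Finsupp.smul_apply, hf m hm]

/-- Entrywise complex conjugation of a subspace `A ⊆ ℂ^N` (`conj A`). -/
noncomputable def conjSub (N : ℕ) (A : Submodule ℂ (EuclideanSpace ℂ (Fin N))) :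
    Submodule ℂ (EuclideanSpace ℂ (Fin N)) where
  carrier := (fun v : EuclideanSpace ℂ (Fin N) =>
    (WithLp.toLp 2 (fun j => (starRingEnd ℂ) (v j)) : EuclideanSpace ℂ (Fin N))) '' A
  zero_mem' := ⟨0, A.zero_mem, by ext j; simp⟩
  add_mem' := by
    rintro x y ⟨a, ha, rfl⟩ ⟨b, hb, rfl⟩
    exact ⟨a + b, A.add_mem ha hb, by ext j; simp⟩
  smul_mem' := by
    rintro c x ⟨a, ha, rfl⟩
    exact ⟨(starRingEnd ℂ) c • a, A.smul_mem _ ha, by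
      ext j
      simp [mul_comm]⟩
/-- pointwise-defined submodule -/
noncomputable def ptwise (N : ℕ) (F : ℤ → Submodule ℂ (EuclideanSpace ℂ (Fin N))) :
    Submodule ℂ (ℤ →₀ EuclideanSpace ℂ (Fin N)) where
  carrier := {f | ∀ m, f m ∈ F m}
  zero_mem' := by intro m; simp
  add_mem' := by
    intro f g hf hg m
    simpa using add_mem (hf m) (hg m)
  smul_mem' := by
    intro c f hf m
    simpa using Submodule.smul_mem _ c (hf m)

lemma mem_ptwise {N : ℕ} {F : ℤ → Submodule ℂ (EuclideanSpace ℂ (Fin N))}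
    {f : ℤ →₀ EuclideanSpace ℂ (Fin N)} : f ∈ ptwise N F ↔ ∀ m, f m ∈ F m := Iff.rfl

lemma mem_shiftedHplus {N : ℕ} {d : ℤ} {f : ℤ →₀ EuclideanSpace ℂ (Fin N)} :
    f ∈ shiftedHplus N d ↔ ∀ m < d, f m = 0 := Iff.rfl

lemma single_mem_atDeg {N : ℕ} {k : ℤ} {V : Submodule ℂ (EuclideanSpace ℂ (Fin N))}
    {v : EuclideanSpace ℂ (Fin N)} (hv : v ∈ V) : Finsupp.single k v ∈ atDeg N k V :=
  ⟨v, hv, rfl⟩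

lemma single_mem_shiftedHplus {N : ℕ} {d k : ℤ} (hk : d ≤ k) (v : EuclideanSpace ℂ (Fin N)) :
    Finsupp.single k v ∈ shiftedHplus N d := by
  intro m hm
  exact Finsupp.single_eq_of_ne (by omega)

lemma atDeg_le_shiftedHplus {N : ℕ} {d k : ℤ} (hk : d ≤ k)
    (V : Submodule ℂ (EuclideanSpace ℂ (Fin N))) : atDeg N k V ≤ shiftedHplus N d := by
  rintro f ⟨v, hv, rfl⟩
  exact single_mem_shiftedHplus hk v

lemma atDeg_le_ptwise {N : ℕ} {k : ℤ} {V : Submodule ℂ (EuclideanSpace ℂ (Fin N))}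
    {F : ℤ → Submodule ℂ (EuclideanSpace ℂ (Fin N))} (h : V ≤ F k) :
    atDeg N k V ≤ ptwise N F := by
  rintro f ⟨v, hv, rfl⟩ m
  rcases eq_or_ne m k with rfl | hm
  · simpa [Finsupp.single_eq_same] using h hv
  · rw [show ((Finsupp.lsingle k) v : ℤ →₀ EuclideanSpace ℂ (Fin N)) m
        = Finsupp.single k v m from rfl, Finsupp.single_eq_of_ne' (Ne.symm hm)]
    exact (F m).zero_mem

lemma shiftedHplus_le_ptwise {N : ℕ} {d : ℤ}
    {F : ℤ → Submodule ℂ (EuclideanSpace ℂ (Fin N))} (h : ∀ m, d ≤ m → F m = ⊤) :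
    shiftedHplus N d ≤ ptwise N F := by
  intro f hf m
  rcases lt_or_ge m d with hm | hm
  · rw [hf m hm]; exact (F m).zero_mem
  · rw [h m hm]; trivial

lemma mem_of_ptwise_singles {N : ℕ} {W : Submodule ℂ (ℤ →₀ EuclideanSpace ℂ (Fin N))}
    {F : ℤ → Submodule ℂ (EuclideanSpace ℂ (Fin N))}
    (hW : ∀ m v, v ∈ F m → Finsupp.single m v ∈ W)
    (f : ℤ →₀ EuclideanSpace ℂ (Fin N)) (hf : ∀ m, f m ∈ F m) : f ∈ W := by
  induction f using Finsupp.induction with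
  | zero => exact W.zero_mem
  | single_add a b g hag hb ih =>
    have h1 : ∀ m, g m ∈ F m := by
      intro m
      rcases eq_or_ne m a with rfl | hm
      · rw [Finsupp.notMem_support_iff.mp hag]; exact (F m).zero_mem
      · have := hf m
        rwa [Finsupp.add_apply, Finsupp.single_eq_of_ne' (Ne.symm hm), zero_add] at this
    refine W.add_mem (hW a b ?_) (ih h1)
    have := hf a
    rwa [Finsupp.add_apply, Finsupp.single_eq_same,
      Finsupp.notMem_support_iff.mp hag, add_zero] at this

/-- The subspace of `ℂ^N` prescribed at degree `m` by the Grassmannian model `W_ξ`. -/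
noncomputable def Fdeg (N n : ℕ) (A : ℕ → Submodule ℂ (EuclideanSpace ℂ (Fin N))) (m : ℤ) :
    Submodule ℂ (EuclideanSpace ℂ (Fin N)) :=
  if m < 0 then (if -(n : ℤ) ≤ m then A (-m).toNat else ⊥)
  else if m < n then (conjSub N (A (m.toNat + 1)))ᗮ else ⊤

lemma W_le_ptwise (N n : ℕ) (A : ℕ → Submodule ℂ (EuclideanSpace ℂ (Fin N))) :
    ((⨆ i ∈ Finset.Icc 1 n, atDeg N (-(i : ℤ)) (A i)) ⊔
        (⨆ i ∈ Finset.range n, atDeg N (i : ℤ) ((conjSub N (A (i + 1)))ᗮ)) ⊔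
        shiftedHplus N (n : ℤ)) ≤ ptwise N (Fdeg N n A) := by
  refine sup_le (sup_le ?_ ?_) ?_
  · refine iSup₂_le fun i hi => ?_
    simp only [Finset.mem_Icc] at hi
    refine atDeg_le_ptwise ?_
    rw [Fdeg, if_pos (by omega : (-(i : ℤ)) < 0), if_pos (by omega : -(n : ℤ) ≤ -(i : ℤ)),
      (by omega : (-(-(i : ℤ))).toNat = i)]
  · refine iSup₂_le fun i hi => ?_
    simp only [Finset.mem_range] at hi
    refine atDeg_le_ptwise ?_
    rw [Fdeg, if_neg (by omega : ¬ ((i : ℤ) < 0)), if_pos (by omega : (i : ℤ) < n),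
      (by omega : ((i : ℤ)).toNat = i)]
  · refine shiftedHplus_le_ptwise fun m hm => ?_
    rw [Fdeg, if_neg (by omega), if_neg (by omega)]

lemma ptwise_le_W (N n : ℕ) (A : ℕ → Submodule ℂ (EuclideanSpace ℂ (Fin N))) :
    ptwise N (Fdeg N n A) ≤
      ((⨆ i ∈ Finset.Icc 1 n, atDeg N (-(i : ℤ)) (A i)) ⊔
        (⨆ i ∈ Finset.range n, atDeg N (i : ℤ) ((conjSub N (A (i + 1)))ᗮ)) ⊔
        shiftedHplus N (n : ℤ)) := by
  intro f hf
  refine mem_of_ptwise_singles (fun m v hv => ?_) f hf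
  rw [Fdeg] at hv
  split_ifs at hv with h1 h2 h3
  · -- m < 0, -n ≤ m : goes into A part
    have hmem : ((-m).toNat) ∈ Finset.Icc 1 n := by
      simp only [Finset.mem_Icc]; omega
    apply Submodule.mem_sup_left
    apply Submodule.mem_sup_left
    have hle := le_iSup₂ (f := fun i (_ : i ∈ Finset.Icc 1 n) => atDeg N (-(i : ℤ)) (A i))
      ((-m).toNat) hmem
    apply hle
    rw [(by omega : -(((-m).toNat : ℕ) : ℤ) = m)]
    exact single_mem_atDeg hv
  · simp only [Submodule.mem_bot] at hv
    rw [hv, Finsupp.single_zero]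
    exact Submodule.zero_mem _
  · have hmem : m.toNat ∈ Finset.range n := by
      simp only [Finset.mem_range]; omega
    apply Submodule.mem_sup_left
    apply Submodule.mem_sup_right
    have hle := le_iSup₂
      (f := fun i (_ : i ∈ Finset.range n) => atDeg N (i : ℤ) ((conjSub N (A (i + 1)))ᗮ))
      m.toNat hmem
    apply hle
    rw [(by omega : ((m.toNat : ℕ) : ℤ) = m)]
    exact single_mem_atDeg hv
  · exact Submodule.mem_sup_right (single_mem_shiftedHplus (by omega) v)

/-- With `N = 2n+1` and a flag `A_{-n} ⊆ ⋯ ⊆ A_{-1}` of isotropic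
subspaces of `ℂ^N`, setting
`W_ξ = Σ_{i=1}^n λ^{-i}A_{-i} + Σ_{i=0}^{n-1} λ^i (conj A_{-i-1})^⊥ + λ^n H_+` and
`W_{ξ₁} = Σ_{i=1}^{n-1} λ^{-i}A_{-i} + Σ_{i=0}^{n-2} λ^i (conj A_{-i-1})^⊥ + λ^{n-1} H_+`,
one has `W_{ξ₁} = (W_ξ ∩ λ^{-n+1}H_+) + λ^{n-1}H_+`. -/
theorem grassmannian_factorization_so_odd (n : ℕ) (hn : 1 ≤ n) (N : ℕ)
    (hN : N = 2 * n + 1)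
    (A : ℕ → Submodule ℂ (EuclideanSpace ℂ (Fin N)))
    (hchain : ∀ i : ℕ, 1 ≤ i → i + 1 ≤ n → A (i + 1) ≤ A i)
    (hiso : ∀ i ∈ Finset.Icc 1 n, ∀ x ∈ A i, ∀ y ∈ A i, ∑ j, x j * y j = 0) :
    ((⨆ i ∈ Finset.Icc 1 (n - 1), atDeg N (-(i : ℤ)) (A i)) ⊔
        (⨆ i ∈ Finset.range (n - 1), atDeg N (i : ℤ) ((conjSub N (A (i + 1)))ᗮ)) ⊔
        shiftedHplus N ((n : ℤ) - 1)) =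
      ((((⨆ i ∈ Finset.Icc 1 n, atDeg N (-(i : ℤ)) (A i)) ⊔
          (⨆ i ∈ Finset.range n, atDeg N (i : ℤ) ((conjSub N (A (i + 1)))ᗮ)) ⊔
          shiftedHplus N (n : ℤ)) ⊓ shiftedHplus N (-(n : ℤ) + 1)) ⊔
        shiftedHplus N ((n : ℤ) - 1)) := by
  have hc : (((n - 1 : ℕ)) : ℤ) = (n : ℤ) - 1 := by omega
  apply le_antisymm
  · refine sup_le (sup_le ?_ ?_) le_sup_right
    · refine iSup₂_le fun i hi => ?_
      simp only [Finset.mem_Icc] at hi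
      refine le_sup_of_le_left (le_inf ?_ (atDeg_le_shiftedHplus (by omega) _))
      refine le_sup_of_le_left (le_sup_of_le_left ?_)
      exact le_iSup₂ (f := fun i (_ : i ∈ Finset.Icc 1 n) => atDeg N (-(i : ℤ)) (A i)) i
        (by simp only [Finset.mem_Icc]; omega)
    · refine iSup₂_le fun i hi => ?_
      simp only [Finset.mem_range] at hi
      refine le_sup_of_le_left (le_inf ?_ (atDeg_le_shiftedHplus (by omega) _))
      refine le_sup_of_le_left (le_sup_of_le_right ?_)
      exact le_iSup₂
        (f := fun i (_ : i ∈ Finset.range n) => atDeg N (i : ℤ) ((conjSub N (A (i + 1)))ᗮ)) i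
        (by simp only [Finset.mem_range]; omega)
  · refine sup_le ?_ le_sup_right
    rintro f ⟨hfW, hfS⟩
    have hp : ∀ m, f m ∈ Fdeg N (n - 1) A m := by
      intro m
      have h1 := W_le_ptwise N n A hfW m
      rw [Fdeg] at h1 ⊢
      split_ifs with c1 c2 c3
      · rw [if_pos c1, if_pos (by omega : -(n : ℤ) ≤ m)] at h1
        exact h1
      · have h0 : f m = 0 := hfS m (by omega)
        rw [h0]
        exact Submodule.zero_mem _
      · rw [if_neg c1, if_pos (by omega : m < (n : ℤ))] at h1
        exact h1
      · trivial
    have hmem := ptwise_le_W N (n - 1) A hp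
    rwa [hc] at hmem
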